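/- Fix c₂, c₃, c₄ > 0, λ₁ > 0, Γ > 0 and φ > 1. For s > 0 define W₂(s) = c₂/s, W₄(s) = c₄/s, p(s) = 1 − e^{−W₂(s)Γ}, M(s) = φ/(λ₁ p(s)) and W₁(s) = c₃/M(s), assume W₁(s) ≠ W₂(s) and c₃ ≠ M(s)W₂(s) for all sufficiently large s, and let Z(s) > 0 be the unique positive solution of z = p(s)·λ₁·(1 − e^{−z·M(s)}). Define P(s) = (1 − e^{−W₄(s)Γ})(1 − e^{−W₂(s)Γ}) + e^{−W₄(s)Γ}·[ e^{−Z(s)M(s)}( (1 − e^{−W₂(s)Γ}) + W₂(s)(e^{−W₁(s)Γ} − e^{−W₂(s)Γ})/(W₁(s) − W₂(s)) ) + (1 − e^{−Z(s)M(s)})(1 − e^{−W₂(s)Γ}) + W₂(s)·Z(s)·∫₀^{M(s)} x e^{−Z(s)x}(e^{−W₂(s)Γ} − e^{−c₃Γ/x})/(x W₂(s) − c₃) dx ]. Then lim_{s→∞} (log P(s))/(log s) = −2. -/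

import Mathlib

set_option maxHeartbeats 1000000

open Real Filter MeasureTheory

/-- Probability that the direct link fails, `p(s) = 1 - exp(-W₂(s) Γ)` with
`W₂(s) = c₂/s`. -/
noncomputable def pFail (c2 Γ : ℝ) (s : ℝ) : ℝ := 1 - Real.exp (-(c2 / s) * Γ)

/-- Energy drawn per relay transmission, `M(s) = φ/(λ₁ p(s))`, keeping the
stability parameter `φ` fixed. -/
noncomputable def Mfn (c2 lam Γ φ : ℝ) (s : ℝ) : ℝ := φ / (lam * pFail c2 Γ s)

/-- Outage probability of the incremental best-effort policy (Eq. (20) with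
`Γ'_th = Γ_th = Γ`), as a function of the link rates, the buffer exponent `Z`,
the drawn energy `M`, and `c₃ = σ²d_RD^α/2`. -/
noncomputable def ibepOutage (Γ W1 W2 W4 Z M c3 : ℝ) : ℝ :=
  (1 - Real.exp (-W4 * Γ)) * (1 - Real.exp (-W2 * Γ))
    + Real.exp (-W4 * Γ) *
      (Real.exp (-Z * M) * ((1 - Real.exp (-W2 * Γ))
          + W2 * (Real.exp (-W1 * Γ) - Real.exp (-W2 * Γ)) / (W1 - W2))
        + (1 - Real.exp (-Z * M)) * (1 - Real.exp (-W2 * Γ))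
        + W2 * Z * ∫ x in (0:ℝ)..M,
            x * Real.exp (-Z * x) * (Real.exp (-W2 * Γ) - Real.exp (-c3 * Γ / x))
              / (x * W2 - c3))

/-- Diversity analysis of the IBEP: with `W₂(s) = c₂/s`, `W₄(s) = c₄/s`,
`M(s) = φ/(λ₁ p(s))`, `W₁(s) = c₃/M(s)` and `Z(s)` the unique positive root of
`z = p(s) λ₁ (1 - exp(-z M(s)))`, the outage probability `P(s)` satisfies
`log P(s)/log s → -2`, i.e. diversity order two. -/

lemma intExp (r A B : ℝ) (hr : r ≠ 0) :
    ∫ x in A..B, Real.exp (r*x) = (Real.exp (r*B) - Real.exp (r*A))/r := by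
  have h : ∀ x ∈ Set.uIcc A B, HasDerivAt (fun y => Real.exp (r*y)/r) (Real.exp (r*x)) x := by
    intro x _
    have h1 : HasDerivAt (fun y => r*y) r x := by
      simpa using (hasDerivAt_id x).const_mul r
    have h2 := (Real.hasDerivAt_exp (r*x)).comp x h1
    simpa [mul_comm, mul_div_assoc, mul_div_cancel_right₀, hr] using h2.div_const r
  have hint : IntervalIntegrable (fun x => Real.exp (r*x)) volume A B :=
    (Real.continuous_exp.comp (continuous_const.mul continuous_id)).intervalIntegrable A B
  rw [intervalIntegral.integral_eq_sub_of_hasDerivAt h hint]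
  ring

lemma slopeRepr (a b : ℝ) (ha : a ≠ 0) (hab : a ≠ b) :
    (1 - Real.exp (-a)) + a * (Real.exp (-b) - Real.exp (-a)) / (b - a)
      = a * ∫ θ in (0:ℝ)..1, Real.exp (-(1-θ)*a) * (1 - Real.exp (-(θ*b))) := by
  have hab' : a - b ≠ 0 := sub_ne_zero.2 hab
  have hba' : b - a ≠ 0 := sub_ne_zero.2 (Ne.symm hab)
  have e1 : ∀ θ : ℝ, Real.exp (-(1-θ)*a) * (1 - Real.exp (-(θ*b)))
      = Real.exp (-a) * Real.exp (a*θ) - Real.exp (-a) * Real.exp ((a-b)*θ) := by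
    intro θ
    rw [mul_one_sub, ← Real.exp_add, ← Real.exp_add]
    ring_nf
    rw [← Real.exp_add]
    ring_nf
  have hi1 : IntervalIntegrable (fun θ => Real.exp (-a) * Real.exp (a*θ)) volume 0 1 :=
    (continuous_const.mul (Real.continuous_exp.comp (continuous_const.mul continuous_id))).intervalIntegrable 0 1
  have hi2 : IntervalIntegrable (fun θ => Real.exp (-a) * Real.exp ((a-b)*θ)) volume 0 1 :=
    (continuous_const.mul (Real.continuous_exp.comp (continuous_const.mul continuous_id))).intervalIntegrable 0 1
  rw [intervalIntegral.integral_congr (g := fun θ => Real.exp (-a) * Real.exp (a*θ)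
      - Real.exp (-a) * Real.exp ((a-b)*θ)) (fun θ _ => e1 θ),
    intervalIntegral.integral_sub hi1 hi2,
    intervalIntegral.integral_const_mul, intervalIntegral.integral_const_mul,
    intExp a 0 1 ha, intExp (a-b) 0 1 hab']
  have h3 : Real.exp (-a) * (Real.exp a - 1) = 1 - Real.exp (-a) := by
    rw [mul_sub, ← Real.exp_add]; simp
  have h4 : Real.exp (-a) * (Real.exp (a-b) - 1) = Real.exp (-b) - Real.exp (-a) := by
    rw [mul_sub, ← Real.exp_add, mul_one]; ring_nf
  simp only [mul_one, mul_zero, Real.exp_zero]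
  rw [mul_div_assoc', mul_div_assoc', h3, h4]
  field_simp
  ring

lemma slope3 (a b : ℝ) (ha : 0 < a) (hb : 0 < b) (hab : a ≠ b) :
    0 ≤ (1 - Real.exp (-a)) + a * (Real.exp (-b) - Real.exp (-a)) / (b - a) ∧
    (1 - Real.exp (-a)) + a * (Real.exp (-b) - Real.exp (-a)) / (b - a) ≤ a ∧
    (1 - Real.exp (-a)) + a * (Real.exp (-b) - Real.exp (-a)) / (b - a) ≤ a*b/2 := by
  rw [slopeRepr a b (ne_of_gt ha) hab]
  have hc : Continuous (fun θ : ℝ => Real.exp (-(1-θ)*a) * (1 - Real.exp (-(θ*b)))) := by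
    continuity
  have hnn : ∀ θ ∈ Set.Icc (0:ℝ) 1, 0 ≤ Real.exp (-(1-θ)*a) * (1 - Real.exp (-(θ*b))) := by
    intro θ hθ
    have : Real.exp (-(θ*b)) ≤ 1 := by
      rw [Real.exp_le_one_iff]
      nlinarith [hθ.1, hθ.2]
    have := Real.exp_pos (-(1-θ)*a)
    nlinarith
  have hle : ∀ θ ∈ Set.Icc (0:ℝ) 1,
      Real.exp (-(1-θ)*a) * (1 - Real.exp (-(θ*b))) ≤ min 1 (θ*b) := by
    intro θ hθ
    have h1 : Real.exp (-(1-θ)*a) ≤ 1 := by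
      rw [Real.exp_le_one_iff]
      nlinarith [hθ.1, hθ.2]
    have h2 : 1 - Real.exp (-(θ*b)) ≤ 1 := by nlinarith [Real.exp_pos (-(θ*b))]
    have h2' : 0 ≤ 1 - Real.exp (-(θ*b)) := by
      have : Real.exp (-(θ*b)) ≤ 1 := by
        rw [Real.exp_le_one_iff]; nlinarith [hθ.1, hθ.2]
      linarith
    have h3 : 1 - Real.exp (-(θ*b)) ≤ θ*b := by
      nlinarith [Real.add_one_le_exp (-(θ*b))]
    have h4 : Real.exp (-(1-θ)*a) * (1 - Real.exp (-(θ*b))) ≤ 1 - Real.exp (-(θ*b)) := by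
      nlinarith [Real.exp_pos (-(1-θ)*a)]
    exact le_min (le_trans h4 h2) (le_trans h4 h3)
  have hI0 : 0 ≤ ∫ θ in (0:ℝ)..1, Real.exp (-(1-θ)*a) * (1 - Real.exp (-(θ*b))) :=
    intervalIntegral.integral_nonneg zero_le_one hnn
  have hI1 : (∫ θ in (0:ℝ)..1, Real.exp (-(1-θ)*a) * (1 - Real.exp (-(θ*b)))) ≤ 1 := by
    have := intervalIntegral.integral_mono_on (μ := volume) zero_le_one
      (hc.intervalIntegrable 0 1) (intervalIntegrable_const (c := (1:ℝ)))
      (fun θ hθ => (hle θ hθ).trans (min_le_left _ _))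
    simpa using this
  have hI2 : (∫ θ in (0:ℝ)..1, Real.exp (-(1-θ)*a) * (1 - Real.exp (-(θ*b)))) ≤ b/2 := by
    have := intervalIntegral.integral_mono_on (μ := volume) zero_le_one
      (hc.intervalIntegrable 0 1)
      ((continuous_id.mul (continuous_const (y := b))).intervalIntegrable 0 1)
      (fun θ hθ => (hle θ hθ).trans (min_le_right _ _))
    have hid : (∫ θ in (0:ℝ)..1, θ * b) = b/2 := by
      rw [intervalIntegral.integral_mul_const, integral_id]
      ring
    calc (∫ θ in (0:ℝ)..1, Real.exp (-(1-θ)*a) * (1 - Real.exp (-(θ*b))))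
        ≤ ∫ θ in (0:ℝ)..1, θ * b := this
    _ = b/2 := hid
  refine ⟨mul_nonneg ha.le hI0, ?_, ?_⟩
  · calc a * ∫ θ in (0:ℝ)..1, Real.exp (-(1-θ)*a) * (1 - Real.exp (-(θ*b)))
        ≤ a * 1 := by exact mul_le_mul_of_nonneg_left hI1 ha.le
    _ = a := mul_one a
  · calc a * ∫ θ in (0:ℝ)..1, Real.exp (-(1-θ)*a) * (1 - Real.exp (-(θ*b)))
        ≤ a * (b/2) := mul_le_mul_of_nonneg_left hI2 ha.le
    _ = a*b/2 := by ring

lemma gBounds (Γ W u : ℝ) (hΓ : 0 < Γ) (hW : 0 < W) (hu : 0 < u) (hne : u ≠ W) :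
    0 ≤ (1 - Real.exp (-W*Γ)) + W * (Real.exp (-u*Γ) - Real.exp (-W*Γ)) / (u - W) ∧
    (1 - Real.exp (-W*Γ)) + W * (Real.exp (-u*Γ) - Real.exp (-W*Γ)) / (u - W) ≤ W*Γ ∧
    (1 - Real.exp (-W*Γ)) + W * (Real.exp (-u*Γ) - Real.exp (-W*Γ)) / (u - W) ≤ Γ^2*u*W/2 := by
  have hab : W*Γ ≠ u*Γ := fun h => hne (mul_right_cancel₀ (ne_of_gt hΓ) h).symm
  have key := slope3 (W*Γ) (u*Γ) (mul_pos hW hΓ) (mul_pos hu hΓ) hab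
  have hEq : (1 - Real.exp (-(W*Γ))) + (W*Γ) * (Real.exp (-(u*Γ)) - Real.exp (-(W*Γ))) / (u*Γ - W*Γ)
      = (1 - Real.exp (-W*Γ)) + W * (Real.exp (-u*Γ) - Real.exp (-W*Γ)) / (u - W) := by
    rw [neg_mul, neg_mul]
    congr 1
    rw [show u*Γ - W*Γ = (u - W)*Γ by ring, show W*Γ * (Real.exp (-(u*Γ)) - Real.exp (-(W*Γ)))
      = W * (Real.exp (-(u*Γ)) - Real.exp (-(W*Γ))) * Γ by ring,
      mul_div_mul_right _ _ (ne_of_gt hΓ)]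
  rw [hEq] at key
  refine ⟨key.1, key.2.1.trans (le_of_eq rfl), key.2.2.trans (le_of_eq (by ring))⟩

lemma Pbounds (Γ W1 W2 W4 Z M c3 : ℝ)
    (hΓ : 0 < Γ) (hW1 : 0 < W1) (hW2 : 0 < W2) (hW4 : 0 < W4)
    (hc3 : 0 < c3) (hZ : 0 < Z) (hM : 1 ≤ M) (h12 : W1 ≠ W2) :
    (1 - Real.exp (-W4*Γ)) * (1 - Real.exp (-W2*Γ)) ≤ ibepOutage Γ W1 W2 W4 Z M c3 ∧
    ibepOutage Γ W1 W2 W4 Z M c3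
      ≤ W4*Γ*(W2*Γ) + Γ^2*W1*W2/2 + Z*(W2*Γ) + Z*((c3*Γ^2*W2/2) * Real.log M) := by
  have hM0 : (0:ℝ) < M := lt_of_lt_of_le one_pos hM
  set F : ℝ → ℝ := fun x =>
    x * Real.exp (-Z * x) * (Real.exp (-W2 * Γ) - Real.exp (-c3 * Γ / x)) / (x * W2 - c3) with hFdef
  set cmb : ℝ → ℝ := fun x => Real.exp (-Z*x) * (1 - Real.exp (-W2*Γ)) + W2 * F x with hcmbdef
  -- identity for F at positive x
  have hF' : ∀ x : ℝ, 0 < x → F x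
      = Real.exp (-Z*x) * ((Real.exp (-(c3/x)*Γ) - Real.exp (-W2*Γ)) / (c3/x - W2)) := by
    intro x hx
    have hx0 : x ≠ 0 := ne_of_gt hx
    have h1 : x * W2 - c3 = x * (W2 - c3/x) := by field_simp
    have h2 : Real.exp (-c3 * Γ / x) = Real.exp (-(c3/x)*Γ) := by ring_nf
    have : F x = (x * (Real.exp (-Z * x) * (Real.exp (-W2 * Γ) - Real.exp (-(c3/x) * Γ))))
        / (x * (W2 - c3/x)) := by
      rw [hFdef]; simp only []; rw [h1, h2]; ring_nf
    rw [this, mul_div_mul_left _ _ hx0]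
    rw [show Real.exp (-(c3/x)*Γ) - Real.exp (-W2*Γ)
        = -(Real.exp (-W2 * Γ) - Real.exp (-(c3/x) * Γ)) by ring,
      show c3/x - W2 = -(W2 - c3/x) by ring, neg_div_neg_eq, mul_div_assoc]
  -- combined identity
  have hcmb' : ∀ x : ℝ, 0 < x → cmb x
      = Real.exp (-Z*x) * ((1 - Real.exp (-W2*Γ))
          + W2 * (Real.exp (-(c3/x)*Γ) - Real.exp (-W2*Γ)) / (c3/x - W2)) := by
    intro x hx
    rw [hcmbdef]; simp only []; rw [hF' x hx]; ring
  -- pointwise bounds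
  have hexple1 : ∀ x : ℝ, 0 ≤ x → Real.exp (-Z*x) ≤ 1 := by
    intro x hx
    rw [Real.exp_le_one_iff]
    have := mul_nonneg hZ.le hx
    linarith
  have hgammaW2 : 0 ≤ 1 - Real.exp (-W2*Γ) ∧ 1 - Real.exp (-W2*Γ) ≤ W2*Γ := by
    constructor
    · have : Real.exp (-W2*Γ) ≤ 1 := by
        rw [Real.exp_le_one_iff]; nlinarith
      linarith
    · nlinarith [Real.add_one_le_exp (-W2*Γ)]
  have h0 : ∀ x ∈ Set.Icc (0:ℝ) M, 0 ≤ cmb x := by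
    intro x hx
    rcases eq_or_lt_of_le hx.1 with h | h
    · rw [hcmbdef]; simp only []
      have : F 0 = 0 := by rw [hFdef]; simp
      rw [← h, this]
      simp only [mul_zero, add_zero, neg_mul, mul_zero, neg_zero, Real.exp_zero, one_mul]
      simp only [neg_mul] at hgammaW2
      linarith [hgammaW2.1]
    · rw [hcmb' x h]
      rcases eq_or_ne (c3/x) W2 with he | he
      · rw [he]
        simp only [sub_self, mul_zero, zero_div, div_zero, add_zero]
        exact mul_nonneg (Real.exp_pos _).le hgammaW2.1
      · have hu : 0 < c3/x := div_pos hc3 h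
        exact mul_nonneg (Real.exp_pos _).le (gBounds Γ W2 (c3/x) hΓ hW2 hu he).1
  have h1 : ∀ x ∈ Set.Icc (0:ℝ) M, cmb x ≤ W2*Γ := by
    intro x hx
    rcases eq_or_lt_of_le hx.1 with h | h
    · rw [hcmbdef]; simp only []
      have : F 0 = 0 := by rw [hFdef]; simp
      rw [← h, this]
      simp only [mul_zero, add_zero, neg_mul, mul_zero, neg_zero, Real.exp_zero, one_mul]
      simp only [neg_mul] at hgammaW2
      linarith [hgammaW2.2]
    · rw [hcmb' x h]
      rcases eq_or_ne (c3/x) W2 with he | he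
      · rw [he]
        simp only [sub_self, mul_zero, zero_div, div_zero, add_zero]
        calc Real.exp (-Z*x) * (1 - Real.exp (-W2*Γ)) ≤ 1 * (1 - Real.exp (-W2*Γ)) :=
              mul_le_mul_of_nonneg_right (hexple1 x h.le) hgammaW2.1
          _ ≤ W2*Γ := by rw [one_mul]; exact hgammaW2.2
      · have hu : 0 < c3/x := div_pos hc3 h
        obtain ⟨hg0, hg1, _⟩ := gBounds Γ W2 (c3/x) hΓ hW2 hu he
        calc Real.exp (-Z*x) * _ ≤ 1 * _ := mul_le_mul_of_nonneg_right (hexple1 x h.le) hg0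
          _ ≤ W2*Γ := by rw [one_mul]; exact hg1
  have h2 : ∀ x ∈ Set.Icc (1:ℝ) M, x ≠ c3/W2 → cmb x ≤ (c3*Γ^2*W2/2) * x⁻¹ := by
    intro x hx hxne
    have hxpos : 0 < x := lt_of_lt_of_le one_pos hx.1
    have he : c3/x ≠ W2 := by
      intro h
      apply hxne
      field_simp at h ⊢
      linarith [h]
    rw [hcmb' x hxpos]
    have hu : 0 < c3/x := div_pos hc3 hxpos
    obtain ⟨hg0, _, hg2⟩ := gBounds Γ W2 (c3/x) hΓ hW2 hu he
    calc Real.exp (-Z*x) * _ ≤ 1 * _ := mul_le_mul_of_nonneg_right (hexple1 x hxpos.le) hg0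
      _ = _ := one_mul _
      _ ≤ Γ^2*(c3/x)*W2/2 := hg2
      _ = (c3*Γ^2*W2/2) * x⁻¹ := by field_simp
  -- |F| ≤ Γ on positives
  have hFbdd : ∀ x : ℝ, 0 < x → |F x| ≤ Γ := by
    intro x hx
    rw [hF' x hx]
    rcases eq_or_ne (c3/x) W2 with he | he
    · rw [he]
      simp only [sub_self, zero_div, div_zero, mul_zero, abs_zero]
      exact hΓ.le
    · have hu : 0 < c3/x := div_pos hc3 hx
      obtain ⟨hg0, hg1, _⟩ := gBounds Γ W2 (c3/x) hΓ hW2 hu he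
      rw [mul_div_assoc] at hg0 hg1
      have hcore : |(Real.exp (-(c3/x)*Γ) - Real.exp (-W2*Γ)) / (c3/x - W2)| ≤ Γ := by
        rw [abs_le]
        constructor
        · have h5 : W2 * (-Γ) ≤ W2 * ((Real.exp (-(c3/x)*Γ) - Real.exp (-W2*Γ)) / (c3/x - W2)) := by
            nlinarith [hgammaW2.1, hgammaW2.2]
          exact (mul_le_mul_iff_right₀ hW2).mp h5
        · have h5 : W2 * ((Real.exp (-(c3/x)*Γ) - Real.exp (-W2*Γ)) / (c3/x - W2)) ≤ W2 * Γ := by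
            nlinarith [hgammaW2.1, hgammaW2.2]
          exact (mul_le_mul_iff_right₀ hW2).mp h5
      calc |Real.exp (-Z*x) * _| = Real.exp (-Z*x) * |_| := by
            rw [abs_mul, abs_of_pos (Real.exp_pos _)]
        _ ≤ 1 * Γ := mul_le_mul (hexple1 x hx.le) hcore (abs_nonneg _) one_pos.le
        _ = Γ := one_mul Γ
  -- measurability of F
  have hFmeas : Measurable F := by
    apply Measurable.div
    · exact ((measurable_id.mul (Real.measurable_exp.comp (measurable_const.mul measurable_id))).mul
        ((measurable_const.sub (Real.measurable_exp.comp (measurable_const.div measurable_id)))))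
    · exact (measurable_id.mul measurable_const).sub measurable_const
  -- integrability of F on [A,B] ⊆ [0,∞)
  have hFint : ∀ A B : ℝ, 0 ≤ A → A ≤ B → IntervalIntegrable F volume A B := by
    intro A B hA hAB
    rw [intervalIntegrable_iff_integrableOn_Ioc_of_le hAB]
    apply Integrable.mono' (g := fun _ => Γ)
    · exact integrableOn_const measure_Ioc_lt_top.ne
    · exact hFmeas.aestronglyMeasurable
    · rw [ae_restrict_iff' measurableSet_Ioc]
      exact ae_of_all _ fun x hx => by
        rw [Real.norm_eq_abs]; exact hFbdd x (lt_of_le_of_lt hA hx.1)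
  have hcmbint : ∀ A B : ℝ, 0 ≤ A → A ≤ B → IntervalIntegrable cmb volume A B := by
    intro A B hA hAB
    exact (((Real.continuous_exp.comp (continuous_const.mul continuous_id)).mul
      continuous_const).intervalIntegrable A B).add ((hFint A B hA hAB).const_mul W2)
  -- exponential integral
  have hZne : Z ≠ 0 := ne_of_gt hZ
  have hIexp : ∫ x in (0:ℝ)..M, Real.exp (-Z*x) = (1 - Real.exp (-Z*M))/Z := by
    rw [intExp (-Z) 0 M (neg_ne_zero.2 hZne)]
    rw [mul_zero, Real.exp_zero,
      show Real.exp (-Z*M) - 1 = -(1 - Real.exp (-Z*M)) from by ring, neg_div_neg_eq]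
  have hcont : Continuous (fun x : ℝ => Real.exp (-Z*x) * (1 - Real.exp (-W2*Γ))) :=
    (Real.continuous_exp.comp (continuous_const.mul continuous_id)).mul continuous_const
  have hIcmb : ∫ x in (0:ℝ)..M, cmb x
      = (1 - Real.exp (-Z*M))/Z * (1 - Real.exp (-W2*Γ)) + W2 * ∫ x in (0:ℝ)..M, F x := by
    rw [hcmbdef]
    rw [intervalIntegral.integral_add (hcont.intervalIntegrable 0 M)
      ((hFint 0 M le_rfl hM0.le).const_mul W2),
      intervalIntegral.integral_mul_const, intervalIntegral.integral_const_mul, hIexp]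
  have hIF : (∫ x in (0:ℝ)..M, x * Real.exp (-Z * x)
      * (Real.exp (-W2 * Γ) - Real.exp (-c3 * Γ / x)) / (x * W2 - c3))
      = ∫ x in (0:ℝ)..M, F x := rfl
  have hKey : ibepOutage Γ W1 W2 W4 Z M c3
      = (1 - Real.exp (-W4*Γ)) * (1 - Real.exp (-W2*Γ))
        + Real.exp (-W4*Γ) * (Real.exp (-Z*M) * ((1 - Real.exp (-W2*Γ))
            + W2 * (Real.exp (-W1*Γ) - Real.exp (-W2*Γ)) / (W1 - W2))
          + Z * ∫ x in (0:ℝ)..M, cmb x) := by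
    rw [ibepOutage, hIF, hIcmb]
    have : Z * ((1 - Real.exp (-Z*M))/Z * (1 - Real.exp (-W2*Γ)) + W2 * ∫ x in (0:ℝ)..M, F x)
        = (1 - Real.exp (-Z*M)) * (1 - Real.exp (-W2*Γ)) + W2 * Z * ∫ x in (0:ℝ)..M, F x := by
      field_simp
    rw [mul_add, this]
    ring
  have hgA := gBounds Γ W2 W1 hΓ hW2 hW1 h12
  have hIcmb0 : 0 ≤ ∫ x in (0:ℝ)..M, cmb x := intervalIntegral.integral_nonneg hM0.le h0
  have hbracket0 : 0 ≤ Real.exp (-Z*M) * ((1 - Real.exp (-W2*Γ))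
      + W2 * (Real.exp (-W1*Γ) - Real.exp (-W2*Γ)) / (W1 - W2))
      + Z * ∫ x in (0:ℝ)..M, cmb x :=
    add_nonneg (mul_nonneg (Real.exp_pos _).le hgA.1) (mul_nonneg hZ.le hIcmb0)
  constructor
  · rw [hKey]
    nlinarith [mul_nonneg (Real.exp_pos (-W4*Γ)).le hbracket0]
  · -- split the integral
    have hsplit : (∫ x in (0:ℝ)..M, cmb x)
        = (∫ x in (0:ℝ)..1, cmb x) + ∫ x in (1:ℝ)..M, cmb x :=
      (intervalIntegral.integral_add_adjacent_intervals
        (hcmbint 0 1 le_rfl zero_le_one) (hcmbint 1 M zero_le_one hM)).symm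
    have hI1le : (∫ x in (0:ℝ)..1, cmb x) ≤ W2*Γ := by
      have := intervalIntegral.integral_mono_on (μ := volume) zero_le_one
        (hcmbint 0 1 le_rfl zero_le_one) (intervalIntegrable_const (c := W2*Γ))
        (fun x hx => h1 x ⟨hx.1, hx.2.trans hM⟩)
      simpa using this
    have hI1ge : 0 ≤ ∫ x in (0:ℝ)..1, cmb x :=
      intervalIntegral.integral_nonneg zero_le_one
        (fun x hx => h0 x ⟨hx.1, hx.2.trans hM⟩)
    have hI2ge : 0 ≤ ∫ x in (1:ℝ)..M, cmb x :=
      intervalIntegral.integral_nonneg hM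
        (fun x hx => h0 x ⟨zero_le_one.trans hx.1, hx.2⟩)
    have hbint : IntervalIntegrable (fun x : ℝ => (c3*Γ^2*W2/2) * x⁻¹) volume 1 M := by
      apply ContinuousOn.intervalIntegrable
      apply continuousOn_const.mul
      apply ContinuousOn.inv₀ continuousOn_id
      intro x hx
      rw [Set.uIcc_of_le hM] at hx
      exact ne_of_gt (lt_of_lt_of_le one_pos hx.1)
    have hae : (fun x => cmb x) ≤ᵐ[volume.restrict (Set.Icc (1:ℝ) M)]
        (fun x : ℝ => (c3*Γ^2*W2/2) * x⁻¹) := by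
      show ∀ᵐ x ∂(volume.restrict (Set.Icc (1:ℝ) M)), cmb x ≤ (c3*Γ^2*W2/2) * x⁻¹
      rw [ae_restrict_iff' measurableSet_Icc]
      rw [ae_iff]
      refine measure_mono_null (t := {c3/W2}) ?_ (measure_singleton _)
      intro x hx
      simp only [Set.mem_setOf_eq, not_forall] at hx
      obtain ⟨hx1, hx2⟩ := hx
      by_contra hne2
      exact hx2 (h2 x hx1 hne2)
    have hI2le : (∫ x in (1:ℝ)..M, cmb x) ≤ (c3*Γ^2*W2/2) * Real.log M := by
      have := intervalIntegral.integral_mono_ae_restrict hM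
        (hcmbint 1 M zero_le_one hM) hbint hae
      calc (∫ x in (1:ℝ)..M, cmb x) ≤ ∫ x in (1:ℝ)..M, (c3*Γ^2*W2/2) * x⁻¹ := this
        _ = (c3*Γ^2*W2/2) * Real.log M := by
            rw [intervalIntegral.integral_const_mul, integral_inv_of_pos one_pos hM0, div_one]
    have hT1 : (1 - Real.exp (-W4*Γ)) * (1 - Real.exp (-W2*Γ)) ≤ W4*Γ*(W2*Γ) := by
      have h4a : 0 ≤ 1 - Real.exp (-W4*Γ) := by
        have : Real.exp (-W4*Γ) ≤ 1 := by rw [Real.exp_le_one_iff]; nlinarith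
        linarith
      have h4b : 1 - Real.exp (-W4*Γ) ≤ W4*Γ := by nlinarith [Real.add_one_le_exp (-W4*Γ)]
      calc (1 - Real.exp (-W4*Γ)) * (1 - Real.exp (-W2*Γ)) ≤ (W4*Γ) * (W2*Γ) :=
            mul_le_mul h4b hgammaW2.2 hgammaW2.1 (by positivity)
        _ = W4*Γ*(W2*Γ) := by ring
    have he4 : Real.exp (-W4*Γ) ≤ 1 := by
      rw [Real.exp_le_one_iff]; nlinarith
    have heZM : Real.exp (-Z*M) ≤ 1 := by
      rw [Real.exp_le_one_iff]; nlinarith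
    have hgAle : Real.exp (-Z*M) * ((1 - Real.exp (-W2*Γ))
        + W2 * (Real.exp (-W1*Γ) - Real.exp (-W2*Γ)) / (W1 - W2)) ≤ Γ^2*W1*W2/2 := by
      calc Real.exp (-Z*M) * _ ≤ 1 * _ := mul_le_mul_of_nonneg_right heZM hgA.1
        _ = _ := one_mul _
        _ ≤ Γ^2*W1*W2/2 := hgA.2.2
    have hZI : Z * (∫ x in (0:ℝ)..M, cmb x)
        ≤ Z*(W2*Γ) + Z*((c3*Γ^2*W2/2) * Real.log M) := by
      rw [hsplit, mul_add]
      exact add_le_add (mul_le_mul_of_nonneg_left hI1le hZ.le)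
        (mul_le_mul_of_nonneg_left hI2le hZ.le)
    rw [hKey]
    have hbrk : Real.exp (-W4*Γ) * (Real.exp (-Z*M) * ((1 - Real.exp (-W2*Γ))
        + W2 * (Real.exp (-W1*Γ) - Real.exp (-W2*Γ)) / (W1 - W2))
        + Z * ∫ x in (0:ℝ)..M, cmb x)
        ≤ Real.exp (-Z*M) * ((1 - Real.exp (-W2*Γ))
          + W2 * (Real.exp (-W1*Γ) - Real.exp (-W2*Γ)) / (W1 - W2))
          + Z * ∫ x in (0:ℝ)..M, cmb x := by
      nlinarith [hbracket0, he4, Real.exp_pos (-W4*Γ)]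
    linarith [hT1, hgAle, hZI, hbrk]


lemma one_sub_exp_le (t : ℝ) : 1 - Real.exp (-t) ≤ t := by
  nlinarith [Real.add_one_le_exp (-t)]

lemma half_le_one_sub_exp (t : ℝ) (h0 : 0 ≤ t) (h1 : t ≤ 1) :
    t/2 ≤ 1 - Real.exp (-t) := by
  have h := Real.add_one_le_exp t
  have h2 : Real.exp (-t) ≤ 1/(1+t) := by
    rw [Real.exp_neg, inv_eq_one_div]
    exact one_div_le_one_div_of_le (by linarith) (by linarith)
  have h3 : 1/(1+t) ≤ 1 - t/2 := by
    rw [div_le_iff₀ (by linarith : (0:ℝ) < 1+t)]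
    nlinarith
  linarith


theorem stmt18 (c2 c3 c4 lam Γ φ : ℝ) (Z : ℝ → ℝ)
    (hc2 : 0 < c2) (hc3 : 0 < c3) (hc4 : 0 < c4)
    (hlam : 0 < lam) (hΓ : 0 < Γ) (hφ : 1 < φ)
    (hne : ∀ᶠ s in atTop,
      c3 / Mfn c2 lam Γ φ s ≠ c2 / s ∧ c3 ≠ Mfn c2 lam Γ φ s * (c2 / s))
    (hZ : ∀ s : ℝ, 0 < s → 0 < Z s ∧
      Z s = pFail c2 Γ s * lam * (1 - Real.exp (-(Z s) * Mfn c2 lam Γ φ s)))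
    (hZuniq : ∀ s : ℝ, 0 < s → ∀ z : ℝ, 0 < z →
      z = pFail c2 Γ s * lam * (1 - Real.exp (-z * Mfn c2 lam Γ φ s)) → z = Z s) :
    Tendsto (fun s => Real.log
        (ibepOutage Γ (c3 / Mfn c2 lam Γ φ s) (c2 / s) (c4 / s) (Z s)
          (Mfn c2 lam Γ φ s) c3) / Real.log s)
      atTop (nhds (-2)) := by
  have hφ0 : (0:ℝ) < φ := by linarith
  set Kl : ℝ := c2*c4*Γ^2/4 with hKl
  set Ku : ℝ := c2*c4*Γ^2 + Γ^3*c3*lam*c2^2/(2*φ) + lam*c2^2*Γ^2 + lam*c2^2*c3*Γ^3 with hKu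
  have hKl0 : 0 < Kl := by positivity
  have hKu0 : 0 < Ku := by positivity
  set P : ℝ → ℝ := fun s => ibepOutage Γ (c3 / Mfn c2 lam Γ φ s) (c2 / s) (c4 / s) (Z s)
      (Mfn c2 lam Γ φ s) c3 with hPdef
  have key : ∀ᶠ s in atTop, 1 < s ∧ 0 < Real.log s ∧ Kl/s^2 ≤ P s ∧
      P s ≤ Ku*(1+Real.log s)/s^2 := by
    filter_upwards [hne, eventually_ge_atTop (3:ℝ), eventually_ge_atTop (c2*Γ),
      eventually_ge_atTop (c4*Γ), eventually_ge_atTop (lam*c2*Γ/φ),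
      eventually_ge_atTop (2*φ/(lam*c2*Γ))] with s hnes hs3 hsc2 hsc4 hsm1 hsm2
    have hs0 : (0:ℝ) < s := by linarith
    have hs1 : (1:ℝ) < s := by linarith
    have hlogs : 0 < Real.log s := Real.log_pos hs1
    have hlogs0 : 0 ≤ Real.log s := hlogs.le
    -- facts about p
    have ht2 : (c2/s)*Γ ≤ 1 := by
      rw [div_mul_eq_mul_div, div_le_one hs0]; exact hsc2
    have ht2' : 0 ≤ (c2/s)*Γ := by positivity
    have ht4 : (c4/s)*Γ ≤ 1 := by
      rw [div_mul_eq_mul_div, div_le_one hs0]; exact hsc4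
    have ht4' : 0 ≤ (c4/s)*Γ := by positivity
    have hp_pos : 0 < pFail c2 Γ s := by
      have : Real.exp (-(c2/s)*Γ) < 1 := by
        rw [Real.exp_lt_one_iff]
        have : 0 < (c2/s)*Γ := by positivity
        linarith
      unfold pFail; linarith
    have hp_le : pFail c2 Γ s ≤ c2*Γ/s := by
      have := one_sub_exp_le ((c2/s)*Γ)
      unfold pFail
      rw [show -((c2/s)*Γ) = -(c2/s)*Γ from by ring] at this
      calc 1 - Real.exp (-(c2/s)*Γ) ≤ (c2/s)*Γ := this
        _ = c2*Γ/s := by ring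
    have hp_ge : c2*Γ/(2*s) ≤ pFail c2 Γ s := by
      have := half_le_one_sub_exp ((c2/s)*Γ) ht2' ht2
      unfold pFail
      rw [show -((c2/s)*Γ) = -(c2/s)*Γ from by ring] at this
      calc c2*Γ/(2*s) = (c2/s)*Γ/2 := by ring
        _ ≤ 1 - Real.exp (-(c2/s)*Γ) := this
    set Mv : ℝ := Mfn c2 lam Γ φ s with hMv
    have hMveq : Mv = φ / (lam * pFail c2 Γ s) := rfl
    have hM_pos : 0 < Mv := by
      rw [hMveq]; positivity
    have hM_ge : φ*s/(lam*c2*Γ) ≤ Mv := by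
      rw [hMveq, le_div_iff₀ (by positivity)]
      rw [div_mul_eq_mul_div, div_le_iff₀ (by positivity)]
      calc φ*s*(lam*pFail c2 Γ s) ≤ φ*s*(lam*(c2*Γ/s)) := by
            have := mul_le_mul_of_nonneg_left hp_le hlam.le
            nlinarith [mul_pos hφ0 hs0]
        _ = φ*(lam*c2*Γ) := by field_simp
    have hM_le : Mv ≤ 2*φ*s/(lam*c2*Γ) := by
      rw [hMveq, div_le_div_iff₀ (by positivity) (by positivity)]
      calc φ*(lam*c2*Γ) = 2*φ*s*(lam*(c2*Γ/(2*s))) := by field_simp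
        _ ≤ 2*φ*s*(lam*pFail c2 Γ s) := by
            have := mul_le_mul_of_nonneg_left hp_ge hlam.le
            nlinarith [mul_pos (mul_pos two_pos hφ0) hs0]
    have hM1 : 1 ≤ Mv := by
      refine le_trans ?_ hM_ge
      rw [le_div_iff₀ (by positivity), one_mul]
      rw [div_le_iff₀ hφ0] at hsm1
      linarith [hsm1]
    have hW1pos : 0 < c3/Mv := div_pos hc3 hM_pos
    have hW1le : c3/Mv ≤ c3*lam*c2*Γ/(φ*s) := by
      have hA : 0 < φ*s/(lam*c2*Γ) := by positivity
      calc c3/Mv ≤ c3/(φ*s/(lam*c2*Γ)) := div_le_div_of_nonneg_left hc3.le hA hM_ge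
        _ = c3*lam*c2*Γ/(φ*s) := by rw [div_div_eq_mul_div]; ring
    have hZpos := (hZ s hs0).1
    have hZeq := (hZ s hs0).2
    have hZle : Z s ≤ lam*c2*Γ/s := by
      have hE : 0 < Real.exp (-(Z s) * Mv) := Real.exp_pos _
      have h1 : Z s ≤ pFail c2 Γ s * lam := by
        rw [hZeq]
        nlinarith [mul_pos hp_pos hlam]
      calc Z s ≤ pFail c2 Γ s * lam := h1
        _ ≤ (c2*Γ/s)*lam := mul_le_mul_of_nonneg_right hp_le hlam.le
        _ = lam*c2*Γ/s := by ring
    have hMs2 : Mv ≤ s^2 := by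
      calc Mv ≤ 2*φ*s/(lam*c2*Γ) := hM_le
        _ = (2*φ/(lam*c2*Γ))*s := by ring
        _ ≤ s*s := mul_le_mul_of_nonneg_right hsm2 hs0.le
        _ = s^2 := by ring
    have hlogM : Real.log Mv ≤ 2*Real.log s := by
      calc Real.log Mv ≤ Real.log (s^2) := (Real.log_le_log_iff hM_pos (by positivity)).mpr hMs2
        _ = 2*Real.log s := by rw [Real.log_pow]; norm_num
    have hlogM0 : 0 ≤ Real.log Mv := Real.log_nonneg hM1
    obtain ⟨hlo, hup⟩ := Pbounds Γ (c3/Mv) (c2/s) (c4/s) (Z s) Mv c3 hΓ hW1pos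
      (div_pos hc2 hs0) (div_pos hc4 hs0) hc3 hZpos hM1 hnes.1
    refine ⟨hs1, hlogs, ?_, ?_⟩
    · -- lower bound
      refine le_trans ?_ hlo
      have l4 := half_le_one_sub_exp ((c4/s)*Γ) ht4' ht4
      have l2 := half_le_one_sub_exp ((c2/s)*Γ) ht2' ht2
      rw [show -((c4/s)*Γ) = -(c4/s)*Γ from by ring] at l4
      rw [show -((c2/s)*Γ) = -(c2/s)*Γ from by ring] at l2
      calc Kl/s^2 = ((c4/s)*Γ/2) * ((c2/s)*Γ/2) := by rw [hKl]; field_simp; ring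
        _ ≤ (1 - Real.exp (-(c4/s)*Γ)) * (1 - Real.exp (-(c2/s)*Γ)) := by
            apply mul_le_mul l4 l2 (by positivity) (by linarith [l4, ht4'])
    · -- upper bound
      refine le_trans hup ?_
      have hT1 : (c4/s)*Γ*((c2/s)*Γ) = (c2*c4*Γ^2)/s^2 := by field_simp
      have hT2 : Γ^2*(c3/Mv)*(c2/s)/2 ≤ (Γ^3*c3*lam*c2^2/(2*φ))/s^2 := by
        calc Γ^2*(c3/Mv)*(c2/s)/2 ≤ Γ^2*(c3*lam*c2*Γ/(φ*s))*(c2/s)/2 := by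
              gcongr
          _ = (Γ^3*c3*lam*c2^2/(2*φ))/s^2 := by field_simp
      have hT3 : Z s*((c2/s)*Γ) ≤ (lam*c2^2*Γ^2)/s^2 := by
        calc Z s*((c2/s)*Γ) ≤ (lam*c2*Γ/s)*((c2/s)*Γ) := by
              apply mul_le_mul_of_nonneg_right hZle (by positivity)
          _ = (lam*c2^2*Γ^2)/s^2 := by field_simp
      have hT4 : Z s*((c3*Γ^2*(c2/s)/2)*Real.log Mv)
          ≤ (lam*c2^2*c3*Γ^3)*Real.log s/s^2 := by
        calc Z s*((c3*Γ^2*(c2/s)/2)*Real.log Mv)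
            ≤ (lam*c2*Γ/s)*((c3*Γ^2*(c2/s)/2)*(2*Real.log s)) := by
              apply mul_le_mul hZle ?_ (by positivity) (by positivity)
              exact mul_le_mul_of_nonneg_left hlogM (by positivity)
          _ = (lam*c2^2*c3*Γ^3)*Real.log s/s^2 := by field_simp
      calc (c4/s)*Γ*((c2/s)*Γ) + Γ^2*(c3/Mv)*(c2/s)/2 + Z s*((c2/s)*Γ)
            + Z s*((c3*Γ^2*(c2/s)/2)*Real.log Mv)
          ≤ (c2*c4*Γ^2)/s^2 + (Γ^3*c3*lam*c2^2/(2*φ))/s^2 + (lam*c2^2*Γ^2)/s^2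
            + (lam*c2^2*c3*Γ^3)*Real.log s/s^2 := by
            rw [hT1]
            exact add_le_add (add_le_add (add_le_add le_rfl hT2) hT3) hT4
        _ = ((c2*c4*Γ^2) + (Γ^3*c3*lam*c2^2/(2*φ)) + (lam*c2^2*Γ^2)
            + (lam*c2^2*c3*Γ^3)*Real.log s)/s^2 := by ring
        _ ≤ Ku*(1+Real.log s)/s^2 := by
            rw [div_le_div_iff_of_pos_right (by positivity : (0:ℝ) < s^2), hKu]
            have hKx : (0:ℝ) ≤ c2*c4*Γ^2 + Γ^3*c3*lam*c2^2/(2*φ) + lam*c2^2*Γ^2 := by positivity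
            have hK4 : (0:ℝ) ≤ lam*c2^2*c3*Γ^3 := by positivity
            nlinarith [mul_nonneg hlogs0 hKx, hK4]
  -- final squeeze
  have hlog := Real.tendsto_log_atTop
  have hinv : Tendsto (fun s : ℝ => (Real.log s)⁻¹) atTop (nhds 0) :=
    hlog.inv_tendsto_atTop
  have hg : Tendsto (fun s : ℝ => Real.log Kl * (Real.log s)⁻¹ - 2) atTop (nhds (-2)) := by
    have := (hinv.const_mul (Real.log Kl)).sub_const 2
    simpa using this
  have hll : Tendsto (fun t : ℝ => Real.log (1+t) / t) atTop (nhds 0) := by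
    have h1 : (fun t : ℝ => Real.log (1+t)) =o[atTop] (fun t : ℝ => 1+t) :=
      Real.isLittleO_log_id_atTop.comp_tendsto (tendsto_atTop_add_const_left atTop 1 tendsto_id)
    have h2 : (fun t : ℝ => 1+t) =O[atTop] (fun t : ℝ => t) := by
      apply Asymptotics.isBigO_iff.2 ⟨2, ?_⟩
      filter_upwards [eventually_ge_atTop (1:ℝ)] with t ht
      rw [Real.norm_eq_abs, Real.norm_eq_abs, abs_of_pos (by linarith), abs_of_pos (by linarith)]
      linarith
    exact (h1.trans_isBigO h2).tendsto_div_nhds_zero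
  have hh : Tendsto (fun s : ℝ => (Real.log Ku + Real.log (1 + Real.log s)) / Real.log s - 2)
      atTop (nhds (-2)) := by
    have hc : Tendsto (fun s : ℝ => Real.log (1+Real.log s)/Real.log s) atTop (nhds 0) := by
      have := hll.comp hlog
      exact this
    have h5 := ((hinv.const_mul (Real.log Ku)).add hc).sub_const 2
    have h6 : Tendsto (fun s : ℝ => Real.log Ku * (Real.log s)⁻¹
        + Real.log (1+Real.log s)/Real.log s - 2) atTop (nhds (-2)) := by
      simpa using h5
    refine h6.congr fun s => ?_
    ring
  apply tendsto_of_tendsto_of_tendsto_of_le_of_le' hg hh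
  · filter_upwards [key] with s hs
    obtain ⟨hs1, hlogs, hlo, _⟩ := hs
    have hs0 : (0:ℝ) < s := lt_trans one_pos hs1
    show Real.log Kl * (Real.log s)⁻¹ - 2 ≤ Real.log (P s) / Real.log s
    have hP0 : 0 < P s := lt_of_lt_of_le (by positivity) hlo
    have hlogle : Real.log (Kl/s^2) ≤ Real.log (P s) :=
      (Real.log_le_log_iff (by positivity) hP0).mpr hlo
    have hlogeq : Real.log (Kl/s^2) = Real.log Kl - 2*Real.log s := by
      rw [Real.log_div (ne_of_gt hKl0) (by positivity), Real.log_pow]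
      push_cast; ring
    calc Real.log Kl * (Real.log s)⁻¹ - 2
        = (Real.log Kl - 2*Real.log s)/Real.log s := by
          field_simp
      _ ≤ Real.log (P s)/Real.log s := by
          rw [← hlogeq]
          exact (div_le_div_iff_of_pos_right hlogs).mpr hlogle
  · filter_upwards [key] with s hs
    obtain ⟨hs1, hlogs, hlo, hup⟩ := hs
    have hs0 : (0:ℝ) < s := lt_trans one_pos hs1
    show Real.log (P s) / Real.log s ≤ (Real.log Ku + Real.log (1 + Real.log s)) / Real.log s - 2
    have hP0 : 0 < P s := lt_of_lt_of_le (by positivity) hlo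
    have hlogs0 : 0 ≤ Real.log s := hlogs.le
    have h1L : (0:ℝ) < 1 + Real.log s := by linarith
    have hlogle : Real.log (P s) ≤ Real.log (Ku*(1+Real.log s)/s^2) :=
      (Real.log_le_log_iff hP0 (by positivity)).mpr hup
    have hlogeq : Real.log (Ku*(1+Real.log s)/s^2)
        = Real.log Ku + Real.log (1+Real.log s) - 2*Real.log s := by
      rw [Real.log_div (by positivity) (by positivity),
        Real.log_mul (ne_of_gt hKu0) (ne_of_gt h1L), Real.log_pow]
      push_cast; ring
    calc Real.log (P s)/Real.log s
        ≤ Real.log (Ku*(1+Real.log s)/s^2)/Real.log s :=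
          (div_le_div_iff_of_pos_right hlogs).mpr hlogle
      _ = (Real.log Ku + Real.log (1+Real.log s) - 2*Real.log s)/Real.log s := by
          rw [hlogeq]
      _ = (Real.log Ku + Real.log (1 + Real.log s)) / Real.log s - 2 := by
          field_simp
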